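/- Let L be a real n×n matrix that is positive semidefinite and satisfies that I_n − L is positive semidefinite (equivalently, L is symmetric psd with ‖L‖ ≤ 1); note I_n + L is then also positive semidefinite. Let M be the 2n×2n block matrix [[ I_n, −L ], [ −L, I_n ]], let A := √(I_n − L) and B := √(I_n + L) denote the principal (positive semidefinite) square roots, and let W := (1/2)·[[ A + B, A − B ], [ A − B, A + B ]]. Then M is positive semidefinite, W is positive semidefinite, and W·W = M; that is, W is the principal square root of M. -/

import Mathlib

open Matrix

lemma psd_add {n : ℕ} {M N : Matrix (Fin n) (Fin n) ℝ}
    (hM : M.PosSemidef) (hN : N.PosSemidef) : (M + N).PosSemidef :=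
  .of_dotProduct_mulVec_nonneg (hM.1.add hN.1) fun x => by
    rw [add_mulVec, dotProduct_add]
    exact add_nonneg (hM.dotProduct_mulVec_nonneg x) (hN.dotProduct_mulVec_nonneg x)

lemma psd_smul {m : Type*} [Fintype m] {M : Matrix m m ℝ} (hM : M.PosSemidef)
    {c : ℝ} (hc : 0 ≤ c) : (c • M).PosSemidef :=
  .of_dotProduct_mulVec_nonneg (by unfold Matrix.IsHermitian; rw [conjTranspose_smul, hM.1.eq, star_trivial])
   fun x => by
    rw [smul_mulVec, dotProduct_smul, smul_eq_mul]
    exact mul_nonneg hc (hM.dotProduct_mulVec_nonneg x)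

lemma psd_blockdiag {n : ℕ} {A B : Matrix (Fin n) (Fin n) ℝ}
    (hA : A.PosSemidef) (hB : B.PosSemidef) :
    (fromBlocks A 0 0 B).PosSemidef := by
  refine .of_dotProduct_mulVec_nonneg ?_ ?_
  · unfold Matrix.IsHermitian
    rw [fromBlocks_conjTranspose, hA.1.eq, hB.1.eq]
    simp
  · intro x
    have : dotProduct (star x) ((fromBlocks A 0 0 B) *ᵥ x)
        = dotProduct (star (x ∘ Sum.inl)) (A *ᵥ (x ∘ Sum.inl))
          + dotProduct (star (x ∘ Sum.inr)) (B *ᵥ (x ∘ Sum.inr)) := by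
      simp [dotProduct, Fintype.sum_sum_type, fromBlocks_mulVec, mulVec, Function.comp]
    rw [this]
    exact add_nonneg (hA.dotProduct_mulVec_nonneg _) (hB.dotProduct_mulVec_nonneg _)

theorem stmt_19 (n : ℕ) (L : Matrix (Fin n) (Fin n) ℝ)
    (hL : L.PosSemidef) (hIL : ((1 : Matrix (Fin n) (Fin n) ℝ) - L).PosSemidef) :
    ((1 : Matrix (Fin n) (Fin n) ℝ) + L).PosSemidef ∧
      (Matrix.fromBlocks (1 : Matrix (Fin n) (Fin n) ℝ) (-L) (-L)
        (1 : Matrix (Fin n) (Fin n) ℝ)).PosSemidef ∧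
      ∀ A B : Matrix (Fin n) (Fin n) ℝ,
        A.PosSemidef → A * A = 1 - L → B.PosSemidef → B * B = 1 + L →
          ((2⁻¹ : ℝ) • Matrix.fromBlocks (A + B) (A - B) (A - B) (A + B)).PosSemidef ∧
            ((2⁻¹ : ℝ) • Matrix.fromBlocks (A + B) (A - B) (A - B) (A + B)) *
                ((2⁻¹ : ℝ) • Matrix.fromBlocks (A + B) (A - B) (A - B) (A + B))
              = Matrix.fromBlocks (1 : Matrix (Fin n) (Fin n) ℝ) (-L) (-L)
                  (1 : Matrix (Fin n) (Fin n) ℝ) := by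
  have hIpL : ((1 : Matrix (Fin n) (Fin n) ℝ) + L).PosSemidef := psd_add Matrix.PosSemidef.one hL
  have key : ∀ A B : Matrix (Fin n) (Fin n) ℝ,
      A.PosSemidef → A * A = 1 - L → B.PosSemidef → B * B = 1 + L →
        ((2⁻¹ : ℝ) • Matrix.fromBlocks (A + B) (A - B) (A - B) (A + B)).PosSemidef ∧
          ((2⁻¹ : ℝ) • Matrix.fromBlocks (A + B) (A - B) (A - B) (A + B)) *
              ((2⁻¹ : ℝ) • Matrix.fromBlocks (A + B) (A - B) (A - B) (A + B))
            = Matrix.fromBlocks (1 : Matrix (Fin n) (Fin n) ℝ) (-L) (-L)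
                (1 : Matrix (Fin n) (Fin n) ℝ) := by
    intro A B hA hA2 hB hB2
    set U : Matrix (Fin n ⊕ Fin n) (Fin n ⊕ Fin n) ℝ := fromBlocks 1 1 1 (-1) with hU
    have hUH : Uᴴ = U := by
      simp [hU, fromBlocks_conjTranspose, fromBlocks_transpose]
    have hUDU : U * (fromBlocks A 0 0 B) * U
        = fromBlocks (A + B) (A - B) (A - B) (A + B) := by
      simp only [hU, fromBlocks_multiply]
      congr 1 <;> simp [Matrix.mul_one, Matrix.neg_mul, sub_eq_add_neg] <;> abel
    have h11 : (A + B) * (A + B) + (A - B) * (A - B) = (4 : ℝ) • (1 : Matrix (Fin n) (Fin n) ℝ) := by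
      have h : (A + B) * (A + B) + (A - B) * (A - B) = (A * A + A * A) + (B * B + B * B) := by
        noncomm_ring
      rw [h, hA2, hB2]
      module
    have h12 : (A + B) * (A - B) + (A - B) * (A + B) = (4 : ℝ) • (-L) := by
      have h : (A + B) * (A - B) + (A - B) * (A + B) = (A * A + A * A) - (B * B + B * B) := by
        noncomm_ring
      rw [h, hA2, hB2]
      module
    have h21 : (A - B) * (A + B) + (A + B) * (A - B) = (4 : ℝ) • (-L) := by
      rw [add_comm]; exact h12
    have h22 : (A - B) * (A - B) + (A + B) * (A + B) = (4 : ℝ) • (1 : Matrix (Fin n) (Fin n) ℝ) := by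
      rw [add_comm]; exact h11
    have hXX : (fromBlocks (A + B) (A - B) (A - B) (A + B)) *
        (fromBlocks (A + B) (A - B) (A - B) (A + B))
        = fromBlocks ((4:ℝ) • (1 : Matrix (Fin n) (Fin n) ℝ)) ((4:ℝ) • (-L)) ((4:ℝ) • (-L))
            ((4:ℝ) • (1 : Matrix (Fin n) (Fin n) ℝ)) := by
      rw [fromBlocks_multiply, h11, h12, h21, h22]
    constructor
    · refine psd_smul ?_ (by norm_num : (0:ℝ) ≤ 2⁻¹)
      rw [← hUDU]
      nth_rewrite 1 [← hUH]
      exact (psd_blockdiag hA hB).conjTranspose_mul_mul_same U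
    · rw [smul_mul_smul_comm, hXX, fromBlocks_smul]
      norm_num [smul_smul]
  refine ⟨hIpL, ?_, key⟩
  open scoped MatrixOrder in
  obtain ⟨hW, hWW⟩ := key (CFC.sqrt (1 - L)) (CFC.sqrt (1 + L)) (CFC.sqrt_nonneg _).posSemidef
    (CFC.sqrt_mul_sqrt_self _ hIL.nonneg)
    (CFC.sqrt_nonneg _).posSemidef (CFC.sqrt_mul_sqrt_self _ hIpL.nonneg)
  rw [← hWW]
  nth_rewrite 1 [← hW.1.eq]
  exact Matrix.posSemidef_conjTranspose_mul_self _
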